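/- Let y = (y₀, ȳ) and z = (z₀, z̄) both lie in the second-order cone K_soc ⊂ ℝ^{1+n}. If ⟨y, z⟩ = 0, then y = 0, or z = 0, or there exists a constant η > 0 such that y₀ = η z₀ and ȳ = -η z̄. -/

import Mathlib

/-- Tail of a vector in ℝ^{1+n}. -/
def socTail {n : ℕ} (y : EuclideanSpace ℝ (Fin (n + 1))) : EuclideanSpace ℝ (Fin n) :=
  WithLp.toLp 2 (fun i : Fin n => y i.succ)

/-- The second-order cone in ℝ^{1+n}. -/
def socCone (n : ℕ) : Set (EuclideanSpace ℝ (Fin (n + 1))) :=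
  {y | ‖socTail y‖ ≤ y 0}

/-- Lemma 2.2: orthogonal vectors in the second-order cone are zero or anti-parallel. -/
theorem soc_orthogonal (n : ℕ) (y z : EuclideanSpace ℝ (Fin (n + 1)))
    (hy : y ∈ socCone n) (hz : z ∈ socCone n) (h : (inner ℝ y z : ℝ) = 0) :
    y = 0 ∨ z = 0 ∨
      ∃ η : ℝ, 0 < η ∧ y 0 = η * z 0 ∧ ∀ i : Fin n, y i.succ = -η * z i.succ := by
  by_cases hy0 : y = 0
  · exact Or.inl hy0
  by_cases hz0 : z = 0
  · exact Or.inr (Or.inl hz0)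
  right; right
  set a : EuclideanSpace ℝ (Fin n) := socTail y with ha_def
  set b : EuclideanSpace ℝ (Fin n) := socTail z with hb_def
  have ha : ‖a‖ ≤ y 0 := hy
  have hb : ‖b‖ ≤ z 0 := hz
  have hsum : y 0 * z 0 + (inner ℝ a b : ℝ) = 0 := by
    rw [← h]
    simp only [PiLp.inner_apply, RCLike.inner_apply, conj_trivial, Fin.sum_univ_succ]
    rw [mul_comm (z.ofLp 0)]; rfl
  have hyc : 0 < y 0 := by
    rcases lt_or_eq_of_le (le_trans (norm_nonneg a) ha) with h' | h'
    · exact h'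
    · exfalso; apply hy0
      have haz : a = 0 := by
        have : ‖a‖ ≤ 0 := h' ▸ ha
        simpa using le_antisymm this (norm_nonneg a)
      ext i
      refine Fin.cases ?_ ?_ i
      · exact h'.symm
      · intro j
        have := congrArg (fun v => v j) haz
        simpa [ha_def, socTail] using this
  have hzc : 0 < z 0 := by
    rcases lt_or_eq_of_le (le_trans (norm_nonneg b) hb) with h' | h'
    · exact h'
    · exfalso; apply hz0
      have hbz : b = 0 := by
        have : ‖b‖ ≤ 0 := h' ▸ hb
        simpa using le_antisymm this (norm_nonneg b)
      ext i
      refine Fin.cases ?_ ?_ i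
      · exact h'.symm
      · intro j
        have := congrArg (fun v => v j) hbz
        simpa [hb_def, socTail] using this
  have hcs : -(‖a‖ * ‖b‖) ≤ (inner ℝ a b : ℝ) := neg_le_of_abs_le (abs_real_inner_le_norm a b)
  have key : ‖a‖ * ‖b‖ = y 0 * z 0 := by
    have h1 : y 0 * z 0 = -(inner ℝ a b : ℝ) := by linarith
    have h2 : y 0 * z 0 ≤ ‖a‖ * ‖b‖ := by
      rw [h1]; linarith
    have h3 : ‖a‖ * ‖b‖ ≤ y 0 * z 0 :=
      mul_le_mul ha hb (norm_nonneg b) (le_of_lt hyc)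
    linarith
  have hna : ‖a‖ = y 0 ∧ ‖b‖ = z 0 := by
    constructor
    · nlinarith [norm_nonneg a, norm_nonneg b]
    · nlinarith [norm_nonneg a, norm_nonneg b]
  have hip : (inner ℝ a (-b) : ℝ) = ‖a‖ * ‖-b‖ := by
    rw [inner_neg_right, norm_neg]
    linarith [key]
  have heq := (inner_eq_norm_mul_iff_real).mp hip
  -- heq : ‖-b‖ • a = ‖a‖ • (-b)
  refine ⟨y 0 / z 0, div_pos hyc hzc, by field_simp, ?_⟩
  intro i
  have hcomp := congrArg (fun v => v i) heq
  simp only [norm_neg, PiLp.smul_apply, PiLp.neg_apply, smul_eq_mul] at hcomp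
  -- hcomp : ‖b‖ * a i = ‖a‖ * (-(b i))
  have hai : a i = y i.succ := rfl
  have hbi : b i = z i.succ := rfl
  rw [hai, hbi] at hcomp
  have hbn : ‖b‖ ≠ 0 := by rw [hna.2]; exact ne_of_gt hzc
  rw [hna.1, hna.2] at hcomp
  field_simp
  linarith [hcomp]
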